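/- Let M, M' be subgroups of a free group F in free factor position, i.e., ⟨M, M'⟩ = M * M' (internal free product). If H₁, H₂ ≤ M and H₁', H₂' ≤ M', then ⟨H₁, H₁'⟩ ∩ ⟨H₂, H₂'⟩ = ⟨H₁ ∩ H₂, H₁' ∩ H₂'⟩. -/

import Mathlib

open Monoid

section Letters

variable {ι : Type*} {G : ι → Type*} [∀ i, Group (G i)]

theorem aux_equiv_mul [DecidableEq ι] [∀ i, DecidableEq (G i)] (x y : CoprodI G) :
    CoprodI.Word.equiv (x * y) = x • CoprodI.Word.equiv y := by
  apply CoprodI.Word.equiv.symm.injective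
  simp only [Equiv.symm_apply_apply]
  show x * y = CoprodI.Word.prod (x • CoprodI.Word.equiv y)
  rw [CoprodI.Word.prod_smul]
  congr 1
  exact (CoprodI.Word.equiv.symm_apply_apply y).symm

theorem aux_smul_letters [DecidableEq ι] [∀ i, DecidableEq (G i)]
    {K : ∀ i, Subgroup (G i)} {j : ι} {m : G j} (hm : m ∈ K j)
    {w : CoprodI.Word G} (hw : ∀ l ∈ w.toList, l.2 ∈ K l.1) :
    ∀ l ∈ (CoprodI.of m • w).toList, l.2 ∈ K l.1 := by
  rintro ⟨i, m₁⟩ hl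
  rw [CoprodI.Word.mem_smul_iff] at hl
  rcases hl with ⟨-, h⟩ | ⟨-, rfl, h | ⟨m', hm', rfl⟩ | ⟨-, rfl⟩⟩
  · exact hw _ h
  · exact hw _ (List.mem_of_mem_tail h)
  · exact mul_mem hm (hw _ (List.mem_of_mem_head? hm'))
  · exact hm

theorem aux_letters_mem [DecidableEq ι] [∀ i, DecidableEq (G i)]
    (K : ∀ i, Subgroup (G i)) (x : CoprodI G) :
    x ∈ (⨆ i, (K i).map (CoprodI.of : G i →* CoprodI G)) ↔
      ∀ l ∈ (CoprodI.Word.equiv x).toList, l.2 ∈ K l.1 := by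
  constructor
  · intro hx
    rw [Subgroup.iSup_eq_closure] at hx
    induction hx using Subgroup.closure_induction_left with
    | one =>
      intro l hl
      have : CoprodI.Word.equiv (1 : CoprodI G) = CoprodI.Word.empty :=
        CoprodI.Word.equiv.apply_eq_iff_eq_symm_apply.mpr CoprodI.Word.prod_empty.symm
      rw [this] at hl
      simp [CoprodI.Word.empty] at hl
    | mul_left g hg y hy ih =>
      simp only [Set.mem_iUnion, SetLike.mem_coe, Subgroup.mem_map] at hg
      obtain ⟨i, m, hm, rfl⟩ := hg
      rw [aux_equiv_mul]
      exact aux_smul_letters hm ih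
    | inv_mul_cancel g hg y hy ih =>
      simp only [Set.mem_iUnion, SetLike.mem_coe, Subgroup.mem_map] at hg
      obtain ⟨i, m, hm, rfl⟩ := hg
      rw [← map_inv, aux_equiv_mul]
      exact aux_smul_letters (inv_mem hm) ih
  · intro h
    have hx : CoprodI.Word.prod (CoprodI.Word.equiv x) = x :=
      CoprodI.Word.equiv.symm_apply_apply x
    rw [← hx, CoprodI.Word.prod]
    apply Subgroup.list_prod_mem
    intro g hg
    simp only [List.mem_map] at hg
    obtain ⟨l, hl, rfl⟩ := hg
    exact Subgroup.mem_iSup_of_mem l.1 ⟨l.2, h l hl, rfl⟩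

theorem aux_inf_iSup (K₁ K₂ : ∀ i, Subgroup (G i)) :
    ((⨆ i, (K₁ i).map (CoprodI.of : G i →* CoprodI G)) ⊓
        (⨆ i, (K₂ i).map (CoprodI.of : G i →* CoprodI G)))
      = ⨆ i, ((K₁ i ⊓ K₂ i)).map (CoprodI.of : G i →* CoprodI G) := by
  classical
  ext x
  rw [Subgroup.mem_inf, aux_letters_mem K₁ x, aux_letters_mem K₂ x,
    aux_letters_mem (fun i => K₁ i ⊓ K₂ i) x]
  constructor
  · rintro ⟨h1, h2⟩ l hl
    exact ⟨h1 l hl, h2 l hl⟩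
  · intro h
    exact ⟨fun l hl => (h l hl).1, fun l hl => (h l hl).2⟩

end Letters

section BoolFam

variable {A B : Type u} {N : Type v} [Group A] [Group B] [Group N]

universe u v
abbrev fam (A B : Type u) : Bool → Type u := fun b => cond b A B

instance famGroup (A B : Type u) [Group A] [Group B] : ∀ b, Group (fam A B b)
  | true => inferInstanceAs (Group A)
  | false => inferInstanceAs (Group B)

def famHom (fA : A →* N) (fB : B →* N) : ∀ b, fam A B b →* N
  | true => fA
  | false => fB

def famSub (KA : Subgroup A) (KB : Subgroup B) : ∀ b, Subgroup (fam A B b)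
  | true => KA
  | false => KB

def famPsi (A B : Type u) [Group A] [Group B] : ∀ b, fam A B b →* Coprod A B
  | true => Coprod.inl
  | false => Coprod.inr

theorem famLift_injective (fA : A →* N) (fB : B →* N)
    (h : Function.Injective (Coprod.lift fA fB)) :
    Function.Injective (CoprodI.lift (famHom fA fB)) := by
  classical
  set ψ : CoprodI (fam A B) →* Coprod A B := CoprodI.lift (famPsi A B) with hψ
  set φ : Coprod A B →* CoprodI (fam A B) :=
    Coprod.lift (CoprodI.of (M := fam A B) (i := true)) (CoprodI.of (M := fam A B) (i := false)) with hφ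
  have hcomp : φ.comp ψ = MonoidHom.id _ := by
    apply CoprodI.ext_hom
    intro b
    ext x
    simp only [MonoidHom.comp_apply, MonoidHom.id_apply, hψ, CoprodI.lift_of]
    cases b
    · exact Coprod.lift_apply_inr _ _ x
    · exact Coprod.lift_apply_inl _ _ x
  have hψinj : Function.Injective ψ :=
    Function.LeftInverse.injective (g := φ) fun x => DFunLike.congr_fun hcomp x
  have heq : CoprodI.lift (famHom fA fB) = (Coprod.lift fA fB).comp ψ := by
    apply CoprodI.ext_hom
    intro b
    ext x
    simp only [MonoidHom.comp_apply, hψ, CoprodI.lift_of]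
    cases b
    · exact (Coprod.lift_apply_inr fA fB x).symm
    · exact (Coprod.lift_apply_inl fA fB x).symm
  rw [heq]
  exact h.comp hψinj

theorem main_aux (fA : A →* N) (fB : B →* N)
    (h : Function.Injective (Coprod.lift fA fB))
    (KA₁ KA₂ : Subgroup A) (KB₁ KB₂ : Subgroup B) :
    (KA₁.map fA ⊔ KB₁.map fB) ⊓ (KA₂.map fA ⊔ KB₂.map fB)
      = (KA₁ ⊓ KA₂).map fA ⊔ (KB₁ ⊓ KB₂).map fB := by
  have hinj := famLift_injective fA fB h
  set Φ : CoprodI (fam A B) →* N := CoprodI.lift (famHom fA fB) with hΦ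
  have key : ∀ (KA : Subgroup A) (KB : Subgroup B),
      KA.map fA ⊔ KB.map fB
        = (⨆ b, (famSub KA KB b).map (CoprodI.of : fam A B b →* _)).map Φ := by
    intro KA KB
    rw [Subgroup.map_iSup, iSup_bool_eq]
    congr 1 <;> rw [Subgroup.map_map] <;>
      rw [hΦ, CoprodI.lift_comp_of] <;> rfl
  rw [key KA₁ KB₁, key KA₂ KB₂, key (KA₁ ⊓ KA₂) (KB₁ ⊓ KB₂),
    ← Subgroup.map_inf _ _ Φ hinj, aux_inf_iSup]
  congr 1
  apply iSup_congr
  intro b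
  cases b <;> rfl

end BoolFam

theorem stmt7 (α : Type*) (M M' : Subgroup (FreeGroup α))
    (hfree : Function.Injective (Monoid.Coprod.lift M.subtype M'.subtype))
    (H₁ H₂ H₁' H₂' : Subgroup (FreeGroup α))
    (h₁ : H₁ ≤ M) (h₂ : H₂ ≤ M) (h₁' : H₁' ≤ M') (h₂' : H₂' ≤ M') :
    (H₁ ⊔ H₁') ⊓ (H₂ ⊔ H₂') = (H₁ ⊓ H₂) ⊔ (H₁' ⊓ H₂') := by
  have hmap : ∀ (K H : Subgroup (FreeGroup α)), H ≤ K →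
      (H.subgroupOf K).map K.subtype = H := fun K H hH =>
    (Subgroup.subgroupOf_map_subtype H K).trans (inf_eq_left.mpr hH)
  have key := main_aux M.subtype M'.subtype hfree
    (H₁.subgroupOf M) (H₂.subgroupOf M) (H₁'.subgroupOf M') (H₂'.subgroupOf M')
  rw [hmap M H₁ h₁, hmap M H₂ h₂, hmap M' H₁' h₁', hmap M' H₂' h₂'] at key
  rw [key]
  congr 1
  · rw [← Subgroup.comap_subtype, ← Subgroup.comap_subtype, ← Subgroup.comap_inf,
      Subgroup.comap_subtype, hmap M (H₁ ⊓ H₂) (le_trans inf_le_left h₁)]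
  · rw [← Subgroup.comap_subtype, ← Subgroup.comap_subtype, ← Subgroup.comap_inf,
      Subgroup.comap_subtype, hmap M' (H₁' ⊓ H₂') (le_trans inf_le_left h₁')]
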